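/- Let (S,Σ) be a measurable space, μ a probability measure on (S,Σ), and X a Banach space. The set V_γ(μ;X) of all countably additive vector measures F: Σ → X of bounded γ-variation with respect to μ is a vector space under setwise operations, ‖·‖_{V_γ(μ;X)} is a norm on it, and V_γ(μ;X) is complete with respect to this norm, i.e. it is a Banach space. -/

import Mathlib

open MeasureTheory ProbabilityTheory Function
open scoped ENNReal NNReal

noncomputable section

/-- `γ` is a sequence of independent standard Gaussian random variables on `(Ω, P)`. -/
def IsStdGaussianSeq {Ω : Type*} [MeasurableSpace Ω] (P : Measure Ω) (γ : ℕ → Ω → ℝ) : Prop :=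
  (∀ n, Measurable (γ n)) ∧ ProbabilityTheory.iIndepFun γ P ∧
    ∀ n, Measure.map (γ n) P = ProbabilityTheory.gaussianReal 0 1

/-- The set of quantities `(𝔼 ‖∑ γ_n F(A_n)/√(μ(A_n))‖²)^{1/2}`, taken over all finite
collections of disjoint measurable sets of positive measure; its supremum is the
`γ`-variation of `F` with respect to `μ`. -/
def gammaVarSet {S : Type*} [MeasurableSpace S] {X : Type*} [NormedAddCommGroup X]
    [NormedSpace ℝ X] {Ω : Type*} [MeasurableSpace Ω] (P : Measure Ω) (γ : ℕ → Ω → ℝ)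
    (μ : Measure S) (F : Set S → X) : Set ℝ :=
  { v | ∃ (N : ℕ) (A : Fin N → Set S), (∀ n, MeasurableSet (A n)) ∧
      Pairwise (Disjoint on A) ∧ (∀ n, 0 < μ (A n)) ∧
      v = Real.sqrt (∫ ω, ‖∑ n : Fin N,
            (γ n ω / Real.sqrt ((μ (A n)).toReal)) • F (A n)‖ ^ 2 ∂P) }

/-- `F` has bounded `γ`-variation with respect to `μ`. -/
def HasBoundedGammaVariation {S : Type*} [MeasurableSpace S] {X : Type*} [NormedAddCommGroup X]
    [NormedSpace ℝ X] {Ω : Type*} [MeasurableSpace Ω] (P : Measure Ω) (γ : ℕ → Ω → ℝ)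
    (μ : Measure S) (F : Set S → X) : Prop :=
  BddAbove (gammaVarSet P γ μ F)

/-- The `γ`-variation norm `‖F‖_{V_γ(μ;X)}`. -/
def gammaVar {S : Type*} [MeasurableSpace S] {X : Type*} [NormedAddCommGroup X]
    [NormedSpace ℝ X] {Ω : Type*} [MeasurableSpace Ω] (P : Measure Ω) (γ : ℕ → Ω → ℝ)
    (μ : Measure S) (F : Set S → X) : ℝ :=
  sSup (gammaVarSet P γ μ F)

end


set_option linter.unusedSectionVars false
open MeasureTheory ProbabilityTheory Function Filter Real
open scoped ENNReal NNReal

namespace GVAux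

variable {Ω : Type*} [MeasurableSpace Ω] {P : Measure Ω} [IsProbabilityMeasure P]
  {γ : ℕ → Ω → ℝ}
  {S : Type*} [MeasurableSpace S] {X : Type*} [NormedAddCommGroup X] [NormedSpace ℝ X]
  {μ : Measure S} [IsProbabilityMeasure μ]

noncomputable def Ig : ℝ := ∫ x, x ^ 2 ∂(gaussianReal 0 1)
lemma memL2_gauss : MemLp (id : ℝ → ℝ) 2 (gaussianReal 0 1) := by
  rw [memLp_two_iff_integrable_sq aestronglyMeasurable_id,
    gaussianReal_of_var_ne_zero 0 one_ne_zero,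
    integrable_withDensity_iff (measurable_gaussianPDF 0 1)
      (Filter.Eventually.of_forall fun x => ENNReal.ofReal_lt_top)]
  have : (fun x : ℝ => (id x) ^ 2 * (gaussianPDF 0 1 x).toReal)
      = fun x : ℝ => (√(2 * π * (1:ℝ≥0)))⁻¹ * (x ^ 2 * Real.exp (-(1/2) * x ^ 2)) := by
    funext x
    rw [gaussianPDF, ENNReal.toReal_ofReal (gaussianPDFReal_nonneg 0 1 x), gaussianPDFReal]
    simp only [id, NNReal.coe_one]
    ring_nf
  rw [this]
  refine Integrable.const_mul ?_ _
  have := integrable_rpow_mul_exp_neg_mul_sq (b := 1/2) (by norm_num) (s := 2) (by norm_num)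
  simpa [Real.rpow_natCast] using this

lemma integrable_sq_gauss : Integrable (fun x : ℝ => x ^ 2) (gaussianReal 0 1) := by
  have := memL2_gauss
  rw [memLp_two_iff_integrable_sq aestronglyMeasurable_id] at this
  simpa using this


lemma Ig_pos : 0 < Ig := by
  rw [Ig, integral_pos_iff_support_of_nonneg (fun x => sq_nonneg x) integrable_sq_gauss]
  have hsupp : Function.support (fun x : ℝ => x ^ 2) = {(0:ℝ)}ᶜ := by
    ext x; simp [Function.support, pow_eq_zero_iff]
  rw [hsupp]
  have h0 : (gaussianReal 0 1) {(0:ℝ)} = 0 :=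
    gaussianReal_absolutelyContinuous 0 one_ne_zero (measure_singleton 0)
  rw [prob_compl_eq_one_sub (measurableSet_singleton 0), h0]
  simp

lemma memL2_γ (hm : ∀ n, Measurable (γ n))
    (hmap : ∀ n, Measure.map (γ n) P = gaussianReal 0 1) (n : ℕ) : MemLp (γ n) 2 P := by
  have h := (memLp_map_measure_iff (μ := P) (p := 2) (f := γ n) (g := (id : ℝ → ℝ))
    aestronglyMeasurable_id (hm n).aemeasurable)
  rw [hmap n] at h
  exact h.mp memL2_gauss

lemma int_sq_γ (hm : ∀ n, Measurable (γ n))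
    (hmap : ∀ n, Measure.map (γ n) P = gaussianReal 0 1) (n : ℕ) :
    ∫ ω, (γ n ω) ^ 2 ∂P = Ig := by
  rw [Ig, ← hmap n, integral_map (hm n).aemeasurable]
  exact (measurable_id.pow_const 2).aestronglyMeasurable

lemma memL2_smul_const {f : Ω → ℝ} (hf : MemLp f 2 P) {X : Type*} [NormedAddCommGroup X]
    [NormedSpace ℝ X] (x : X) : MemLp (fun ω => f ω • x) 2 P := by
  refine ⟨hf.aestronglyMeasurable.smul_const x, ?_⟩
  have h : eLpNorm (fun ω => f ω • x) 2 P = eLpNorm (‖x‖ • f) 2 P := by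
    refine eLpNorm_congr_norm_ae (Eventually.of_forall fun ω => ?_)
    simp [norm_smul, abs_mul, mul_comm]
  rw [h]
  exact (hf.const_smul ‖x‖).2

lemma sqrt_integral_eq {X : Type*} [NormedAddCommGroup X] {f : Ω → X} (hf : MemLp f 2 P) :
    Real.sqrt (∫ ω, ‖f ω‖ ^ 2 ∂P) = (eLpNorm f 2 P).toReal := by
  rw [hf.eLpNorm_eq_integral_rpow_norm two_ne_zero ENNReal.ofNat_ne_top]
  rw [ENNReal.toReal_ofReal (Real.rpow_nonneg (integral_nonneg fun ω => by positivity) _)]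
  rw [Real.sqrt_eq_rpow]
  have h2 : (∫ a, ‖f a‖ ^ ((2:ℝ≥0∞)).toReal ∂P) = ∫ ω, ‖f ω‖ ^ (2:ℕ) ∂P := by
    simp only [show ((2:ℝ≥0∞)).toReal = ((2:ℕ):ℝ) by norm_num, Real.rpow_natCast]
  rw [h2]
  norm_num

/-- The random sum appearing in the γ-variation. -/
noncomputable def gsum (γ : ℕ → Ω → ℝ) (μ : Measure S) (F : Set S → X) {N : ℕ}
    (A : Fin N → Set S) (ω : Ω) : X :=
  ∑ n : Fin N, (γ n ω / Real.sqrt ((μ (A n)).toReal)) • F (A n)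

lemma memL2_term (hm : ∀ n, Measurable (γ n))
    (hmap : ∀ n, Measure.map (γ n) P = gaussianReal 0 1) (k : ℕ) (c : ℝ) (x : X) :
    MemLp (fun ω => (γ k ω / c) • x) 2 P := by
  have h1 : MemLp (fun ω => γ k ω / c) 2 P := by
    have h := (memL2_γ hm hmap k).const_smul (c⁻¹)
    have he : (c⁻¹ • γ k) = fun ω => γ k ω / c := by
      funext ω; simp [div_eq_inv_mul]
    rwa [he] at h
  exact memL2_smul_const h1 x

lemma memL2_gsum (hm : ∀ n, Measurable (γ n))
    (hmap : ∀ n, Measure.map (γ n) P = gaussianReal 0 1) (F : Set S → X) {N : ℕ}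
    (A : Fin N → Set S) : MemLp (gsum γ μ F A) 2 P := by
  have := memLp_finset_sum' (μ := P) (p := 2) Finset.univ
    (f := fun n : Fin N => fun ω => (γ n ω / Real.sqrt ((μ (A n)).toReal)) • F (A n))
    (fun i _ => memL2_term hm hmap i _ _)
  have he : (∑ i : Fin N, fun ω => (γ (↑i) ω / √(μ (A i)).toReal) • F (A i)) = gsum γ μ F A := by
    funext ω
    simp [gsum, Finset.sum_apply]
  rwa [he] at this

/-- Membership in `gammaVarSet` rephrased through `gsum`. -/
lemma mem_gammaVarSet_iff {F : Set S → X} {v : ℝ} :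
    v ∈ gammaVarSet P γ μ F ↔ ∃ (N : ℕ) (A : Fin N → Set S), (∀ n, MeasurableSet (A n)) ∧
      Pairwise (Disjoint on A) ∧ (∀ n, 0 < μ (A n)) ∧
      v = Real.sqrt (∫ ω, ‖gsum γ μ F A ω‖ ^ 2 ∂P) := Iff.rfl

lemma zero_mem_gammaVarSet (F : Set S → X) : (0:ℝ) ∈ gammaVarSet P γ μ F := by
  refine ⟨0, fun n => n.elim0, fun n => n.elim0, fun a b hab => a.elim0, fun n => n.elim0, ?_⟩
  simp

lemma nonneg_of_mem {F : Set S → X} {v : ℝ} (hv : v ∈ gammaVarSet P γ μ F) : 0 ≤ v := by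
  obtain ⟨N, A, -, -, -, rfl⟩ := hv; exact Real.sqrt_nonneg _

lemma gammaVar_nonneg {F : Set S → X} (h : BddAbove (gammaVarSet P γ μ F)) :
    0 ≤ gammaVar P γ μ F := le_csSup h (zero_mem_gammaVarSet F)

/-- single-term computation -/
lemma vterm_single (hm : ∀ n, Measurable (γ n))
    (hmap : ∀ n, Measure.map (γ n) P = gaussianReal 0 1) (k : ℕ) {c : ℝ} (hc : 0 < c) (x : X) :
    Real.sqrt (∫ ω, ‖(γ k ω / c) • x‖ ^ 2 ∂P) = Real.sqrt Ig * (‖x‖ / c) := by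
  have h : ∀ ω, ‖(γ k ω / c) • x‖ ^ 2 = (γ k ω) ^ 2 * (‖x‖ / c) ^ 2 := by
    intro ω
    rw [norm_smul, Real.norm_eq_abs, mul_pow, sq_abs, div_pow, div_pow]
    ring
  simp only [h]
  rw [integral_mul_const, int_sq_γ hm hmap, Real.sqrt_mul Ig_pos.le,
    Real.sqrt_sq (by positivity)]

/-- triangle inequality for the terms -/
lemma vterm_add_le (hm : ∀ n, Measurable (γ n))
    (hmap : ∀ n, Measure.map (γ n) P = gaussianReal 0 1) (F G : Set S → X) {N : ℕ}
    (A : Fin N → Set S) :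
    Real.sqrt (∫ ω, ‖gsum γ μ (fun s => F s + G s) A ω‖ ^ 2 ∂P) ≤
      Real.sqrt (∫ ω, ‖gsum γ μ F A ω‖ ^ 2 ∂P) +
      Real.sqrt (∫ ω, ‖gsum γ μ G A ω‖ ^ 2 ∂P) := by
  have hF := memL2_gsum (μ := μ) hm hmap F A
  have hG := memL2_gsum (μ := μ) hm hmap G A
  have hsum : gsum γ μ (fun s => F s + G s) A = fun ω => gsum γ μ F A ω + gsum γ μ G A ω := by
    funext ω
    simp only [gsum, smul_add, Finset.sum_add_distrib]
  rw [sqrt_integral_eq (by rw [hsum]; exact hF.add hG), sqrt_integral_eq hF, sqrt_integral_eq hG,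
    hsum]
  have h1 := eLpNorm_add_le hF.aestronglyMeasurable hG.aestronglyMeasurable one_le_two
  calc (eLpNorm (fun ω => gsum γ μ F A ω + gsum γ μ G A ω) 2 P).toReal
      ≤ ((eLpNorm (gsum γ μ F A) 2 P + eLpNorm (gsum γ μ G A) 2 P : ℝ≥0∞)).toReal :=
        ENNReal.toReal_mono (ENNReal.add_ne_top.mpr ⟨hF.2.ne, hG.2.ne⟩) h1
    _ = _ := ENNReal.toReal_add hF.2.ne hG.2.ne

/-- scalar homogeneity for the terms -/
lemma vterm_smul (c : ℝ) (F : Set S → X) {N : ℕ} (A : Fin N → Set S) :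
    Real.sqrt (∫ ω, ‖gsum γ μ (fun s => c • F s) A ω‖ ^ 2 ∂P) =
      |c| * Real.sqrt (∫ ω, ‖gsum γ μ F A ω‖ ^ 2 ∂P) := by
  have hsm : gsum γ μ (fun s => c • F s) A = fun ω => c • gsum γ μ F A ω := by
    funext ω
    simp only [gsum, Finset.smul_sum, smul_comm c]
  rw [hsm]
  simp only [norm_smul, Real.norm_eq_abs, mul_pow]
  rw [integral_const_mul, Real.sqrt_mul (sq_nonneg |c|), Real.sqrt_sq (abs_nonneg c)]

/-- bound on the term by the sum of norms -/
lemma vterm_le_sum (hm : ∀ n, Measurable (γ n))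
    (hmap : ∀ n, Measure.map (γ n) P = gaussianReal 0 1) (F : Set S → X) {N : ℕ}
    (A : Fin N → Set S) (hpos : ∀ n, 0 < μ (A n)) :
    Real.sqrt (∫ ω, ‖gsum γ μ F A ω‖ ^ 2 ∂P) ≤
      ∑ n : Fin N, (Real.sqrt Ig / Real.sqrt ((μ (A n)).toReal)) * ‖F (A n)‖ := by
  rw [sqrt_integral_eq (memL2_gsum hm hmap F A)]
  have hterm : ∀ n : Fin N, MemLp (fun ω => (γ n ω / Real.sqrt ((μ (A n)).toReal)) • F (A n)) 2 P :=
    fun n => memL2_term hm hmap n _ _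
  have he : gsum γ μ F A = ∑ n : Fin N,
      (fun ω => (γ n ω / Real.sqrt ((μ (A n)).toReal)) • F (A n)) := by
    funext ω; simp [gsum, Finset.sum_apply]
  have h1 : eLpNorm (gsum γ μ F A) 2 P ≤ ∑ n : Fin N,
      eLpNorm (fun ω => (γ n ω / Real.sqrt ((μ (A n)).toReal)) • F (A n)) 2 P := by
    rw [he]
    exact eLpNorm_sum_le (fun i _ => (hterm i).aestronglyMeasurable) one_le_two
  have hfin : ∀ n ∈ Finset.univ, eLpNorm (fun ω =>
      (γ (n : Fin N) ω / Real.sqrt ((μ (A n)).toReal)) • F (A n)) 2 P ≠ ⊤ :=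
    fun n _ => (hterm n).2.ne
  calc (eLpNorm (gsum γ μ F A) 2 P).toReal
      ≤ (∑ n : Fin N, eLpNorm (fun ω =>
          (γ n ω / Real.sqrt ((μ (A n)).toReal)) • F (A n)) 2 P).toReal :=
        ENNReal.toReal_mono (by
          rw [ENNReal.sum_ne_top]; exact hfin) h1
    _ = ∑ n : Fin N, (eLpNorm (fun ω =>
          (γ n ω / Real.sqrt ((μ (A n)).toReal)) • F (A n)) 2 P).toReal :=
        ENNReal.toReal_sum hfin
    _ = _ := by
        refine Finset.sum_congr rfl fun n _ => ?_
        have hc : 0 < Real.sqrt ((μ (A n)).toReal) :=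
          Real.sqrt_pos.mpr (ENNReal.toReal_pos (hpos n).ne' (measure_ne_top μ _))
        rw [← sqrt_integral_eq (hterm n), vterm_single hm hmap n hc]
        rw [div_mul_eq_mul_div, mul_div_assoc]

lemma vterm_mem (F : Set S → X) {N : ℕ} (A : Fin N → Set S) (hmeas : ∀ n, MeasurableSet (A n))
    (hdisj : Pairwise (Disjoint on A)) (hpos : ∀ n, 0 < μ (A n)) :
    Real.sqrt (∫ ω, ‖gsum γ μ F A ω‖ ^ 2 ∂P) ∈ gammaVarSet P γ μ F :=
  ⟨N, A, hmeas, hdisj, hpos, rfl⟩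

lemma sqrtIg_norm_le (hm : ∀ n, Measurable (γ n))
    (hmap : ∀ n, Measure.map (γ n) P = gaussianReal 0 1) {F : Set S → X}
    (hbdd : BddAbove (gammaVarSet P γ μ F)) {A : Set S} (hA : MeasurableSet A)
    (hpos : 0 < μ A) : Real.sqrt Ig * ‖F A‖ ≤ gammaVar P γ μ F := by
  set c := Real.sqrt ((μ A).toReal) with hcdef
  have hcpos : 0 < c := Real.sqrt_pos.mpr (ENNReal.toReal_pos hpos.ne' (measure_ne_top μ A))
  have hc1 : c ≤ 1 := by
    rw [hcdef]
    refine Real.sqrt_le_one.2 ?_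
    exact ENNReal.toReal_le_of_le_ofReal zero_le_one (by simpa using prob_le_one)
  have heq : Real.sqrt (∫ ω, ‖gsum γ μ F (fun _ : Fin 1 => A) ω‖ ^ 2 ∂P)
      = Real.sqrt Ig * (‖F A‖ / c) := by
    have hg : gsum γ μ F (fun _ : Fin 1 => A) = fun ω => (γ 0 ω / c) • F A := by
      funext ω
      simp [gsum, hcdef]
    rw [hg, vterm_single hm hmap 0 hcpos]
  have hmem : Real.sqrt Ig * (‖F A‖ / c) ∈ gammaVarSet P γ μ F := by
    rw [← heq]
    exact vterm_mem F _ (fun _ => hA) (Subsingleton.pairwise) (fun _ => hpos)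
  calc Real.sqrt Ig * ‖F A‖ ≤ Real.sqrt Ig * (‖F A‖ / c) := by
        have : ‖F A‖ ≤ ‖F A‖ / c := by
          rw [le_div_iff₀ hcpos]
          exact mul_le_of_le_one_right (norm_nonneg _) hc1
        exact mul_le_mul_of_nonneg_left this (Real.sqrt_nonneg _)
    _ ≤ gammaVar P γ μ F := le_csSup hbdd hmem

lemma norm_apply_le (hm : ∀ n, Measurable (γ n))
    (hmap : ∀ n, Measure.map (γ n) P = gaussianReal 0 1) (V : VectorMeasure S X)
    (hbdd : BddAbove (gammaVarSet P γ μ ⇑V)) {A : Set S} (hA : MeasurableSet A) :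
    Real.sqrt Ig * ‖V A‖ ≤ 2 * gammaVar P γ μ ⇑V := by
  have hnn : 0 ≤ gammaVar P γ μ ⇑V := gammaVar_nonneg hbdd
  by_cases hpos : 0 < μ A
  · have := sqrtIg_norm_le hm hmap hbdd hA hpos
    linarith
  · have hzero : μ A = 0 := by
      by_contra h
      exact hpos (pos_iff_ne_zero.mpr h)
    have hAc : 0 < μ Aᶜ := by
      rw [prob_compl_eq_one_sub hA, hzero]
      simp
    have hun : 0 < μ (Set.univ : Set S) := by simp
    have hVA : V A = V Set.univ - V Aᶜ := by
      have : V Set.univ = V A + V Aᶜ := by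
        rw [← VectorMeasure.of_union disjoint_compl_right hA hA.compl, Set.union_compl_self]
      rw [this]; abel
    calc Real.sqrt Ig * ‖V A‖ ≤ Real.sqrt Ig * (‖V Set.univ‖ + ‖V Aᶜ‖) := by
          rw [hVA]
          exact mul_le_mul_of_nonneg_left (norm_sub_le _ _) (Real.sqrt_nonneg _)
      _ = Real.sqrt Ig * ‖V Set.univ‖ + Real.sqrt Ig * ‖V Aᶜ‖ := by ring
      _ ≤ gammaVar P γ μ ⇑V + gammaVar P γ μ ⇑V :=
          add_le_add (sqrtIg_norm_le hm hmap hbdd MeasurableSet.univ hun)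
            (sqrtIg_norm_le hm hmap hbdd hA.compl hAc)
      _ = 2 * gammaVar P γ μ ⇑V := by ring

/-- finite additivity of vector measures over finsets -/
lemma vm_sum_finset (v : VectorMeasure S X) {f : ℕ → Set S} (hf : ∀ i, MeasurableSet (f i))
    (hd : Pairwise (Disjoint on f)) (s : Finset ℕ) :
    ∑ i ∈ s, v (f i) = v (⋃ i ∈ s, f i) := by
  classical
  refine Finset.induction_on s (by simp) ?_
  intro a t ha ih
  have hdis : Disjoint (f a) (⋃ i ∈ t, f i) := by
    rw [Set.disjoint_iUnion_right]
    intro i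
    rw [Set.disjoint_iUnion_right]
    intro hi
    exact hd (fun h => ha (h ▸ hi))
  rw [Finset.sum_insert ha, ih, Finset.set_biUnion_insert,
    VectorMeasure.of_union hdis (hf a) (MeasurableSet.biUnion t.countable_toSet fun i _ => hf i)]

lemma gammaVarSet_zero_fun {F : Set S → X} (hF : ∀ s, F s = 0) {v : ℝ}
    (hv : v ∈ gammaVarSet P γ μ F) : v = 0 := by
  obtain ⟨N, A, -, -, -, rfl⟩ := hv
  simp [hF]

lemma bdd_zero_fun {F : Set S → X} (hF : ∀ s, F s = 0) : BddAbove (gammaVarSet P γ μ F) :=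
  ⟨0, fun v hv => (gammaVarSet_zero_fun hF hv).le⟩

lemma gammaVar_zero_fun {F : Set S → X} (hF : ∀ s, F s = 0) : gammaVar P γ μ F = 0 :=
  le_antisymm (csSup_le ⟨0, zero_mem_gammaVarSet F⟩ fun v hv => (gammaVarSet_zero_fun hF hv).le)
    (le_csSup (bdd_zero_fun hF) (zero_mem_gammaVarSet F))

lemma bdd_add (hm : ∀ n, Measurable (γ n))
    (hmap : ∀ n, Measure.map (γ n) P = gaussianReal 0 1) {F G : Set S → X}
    (hF : BddAbove (gammaVarSet P γ μ F)) (hG : BddAbove (gammaVarSet P γ μ G)) :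
    BddAbove (gammaVarSet P γ μ (fun s => F s + G s)) ∧
    gammaVar P γ μ (fun s => F s + G s) ≤ gammaVar P γ μ F + gammaVar P γ μ G := by
  have hb : ∀ v ∈ gammaVarSet P γ μ (fun s => F s + G s),
      v ≤ gammaVar P γ μ F + gammaVar P γ μ G := by
    rintro v ⟨N, A, hmeas, hdisj, hpos, rfl⟩
    calc Real.sqrt (∫ ω, ‖gsum γ μ (fun s => F s + G s) A ω‖ ^ 2 ∂P)
        ≤ Real.sqrt (∫ ω, ‖gsum γ μ F A ω‖ ^ 2 ∂P) +
          Real.sqrt (∫ ω, ‖gsum γ μ G A ω‖ ^ 2 ∂P) := vterm_add_le hm hmap F G A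
      _ ≤ _ := add_le_add (le_csSup hF (vterm_mem F A hmeas hdisj hpos))
          (le_csSup hG (vterm_mem G A hmeas hdisj hpos))
  exact ⟨⟨_, hb⟩, csSup_le ⟨0, zero_mem_gammaVarSet _⟩ hb⟩

lemma bdd_smul {F : Set S → X} (hF : BddAbove (gammaVarSet P γ μ F)) (c : ℝ) :
    BddAbove (gammaVarSet P γ μ (fun s => c • F s)) := by
  refine ⟨|c| * gammaVar P γ μ F, ?_⟩
  rintro v ⟨N, A, hmeas, hdisj, hpos, rfl⟩
  calc Real.sqrt (∫ ω, ‖gsum γ μ (fun s => c • F s) A ω‖ ^ 2 ∂P)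
      = |c| * Real.sqrt (∫ ω, ‖gsum γ μ F A ω‖ ^ 2 ∂P) := vterm_smul c F A
    _ ≤ |c| * gammaVar P γ μ F :=
        mul_le_mul_of_nonneg_left (le_csSup hF (vterm_mem F A hmeas hdisj hpos)) (abs_nonneg c)

lemma gammaVar_smul_le {F : Set S → X} (hF : BddAbove (gammaVarSet P γ μ F)) (c : ℝ) :
    gammaVar P γ μ (fun s => c • F s) ≤ |c| * gammaVar P γ μ F := by
  refine csSup_le ⟨0, zero_mem_gammaVarSet _⟩ ?_
  rintro v ⟨N, A, hmeas, hdisj, hpos, rfl⟩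
  calc Real.sqrt (∫ ω, ‖gsum γ μ (fun s => c • F s) A ω‖ ^ 2 ∂P)
      = |c| * Real.sqrt (∫ ω, ‖gsum γ μ F A ω‖ ^ 2 ∂P) := vterm_smul c F A
    _ ≤ |c| * gammaVar P γ μ F :=
        mul_le_mul_of_nonneg_left (le_csSup hF (vterm_mem F A hmeas hdisj hpos)) (abs_nonneg c)

lemma gammaVar_smul {F : Set S → X} (hF : BddAbove (gammaVarSet P γ μ F)) (c : ℝ) :
    gammaVar P γ μ (fun s => c • F s) = |c| * gammaVar P γ μ F := by
  rcases eq_or_ne c 0 with hc | hc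
  · subst hc
    rw [gammaVar_zero_fun (fun s => zero_smul ℝ (F s)), abs_zero, zero_mul]
  · refine le_antisymm (gammaVar_smul_le hF c) ?_
    have h2 := gammaVar_smul_le (bdd_smul hF c) c⁻¹
    have he : (fun s => c⁻¹ • c • F s) = F := funext fun s => inv_smul_smul₀ hc (F s)
    rw [he] at h2
    have hcc : |c| * |c⁻¹| = 1 := by
      rw [abs_inv, mul_inv_cancel₀ (abs_ne_zero.mpr hc)]
    calc |c| * gammaVar P γ μ F ≤ |c| * (|c⁻¹| * gammaVar P γ μ (fun s => c • F s)) :=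
          mul_le_mul_of_nonneg_left h2 (abs_nonneg c)
      _ = gammaVar P γ μ (fun s => c • F s) := by rw [← mul_assoc, hcc, one_mul]

lemma bdd_sub (hm : ∀ n, Measurable (γ n))
    (hmap : ∀ n, Measure.map (γ n) P = gaussianReal 0 1) {F G : Set S → X}
    (hF : BddAbove (gammaVarSet P γ μ F)) (hG : BddAbove (gammaVarSet P γ μ G)) :
    BddAbove (gammaVarSet P γ μ (fun s => F s - G s)) := by
  have h1 : (fun s => F s - G s) = fun s => F s + (-1 : ℝ) • G s :=
    funext fun s => by rw [neg_one_smul, sub_eq_add_neg]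
  rw [h1]
  exact (bdd_add hm hmap hF (bdd_smul hG (-1))).1

lemma vterm_sub_rev (F G : Set S → X) {N : ℕ} (A : Fin N → Set S) :
    Real.sqrt (∫ ω, ‖gsum γ μ (fun s => F s - G s) A ω‖ ^ 2 ∂P) =
    Real.sqrt (∫ ω, ‖gsum γ μ (fun s => G s - F s) A ω‖ ^ 2 ∂P) := by
  have h : (fun s => F s - G s) = fun s => (-1 : ℝ) • (G s - F s) :=
    funext fun s => by rw [neg_one_smul, neg_sub]
  rw [h, vterm_smul]
  simp

end GVAux


/-- The space `V_γ(μ;X)` of countably additive vector measures of bounded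
`γ`-variation with respect to `μ` is a vector space under setwise operations, the
`γ`-variation is a norm on it, and it is complete with respect to this norm, i.e. it is a
Banach space. -/
theorem gammaVariation_banachSpace
    {S : Type*} [MeasurableSpace S] {X : Type*} [NormedAddCommGroup X] [NormedSpace ℝ X]
    [CompleteSpace X]
    {Ω : Type*} [MeasurableSpace Ω] (P : Measure Ω) [IsProbabilityMeasure P]
    (γ : ℕ → Ω → ℝ) (hγ : IsStdGaussianSeq P γ)
    (μ : Measure S) [IsProbabilityMeasure μ] :
    -- `V_γ(μ;X)` is closed under the vector space operations (setwise operations):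
    ((0 : VectorMeasure S X) ∈ {F : VectorMeasure S X | HasBoundedGammaVariation P γ μ ⇑F}) ∧
    (∀ F G : VectorMeasure S X, HasBoundedGammaVariation P γ μ ⇑F →
      HasBoundedGammaVariation P γ μ ⇑G → HasBoundedGammaVariation P γ μ ⇑(F + G)) ∧
    (∀ (c : ℝ) (F : VectorMeasure S X), HasBoundedGammaVariation P γ μ ⇑F →
      HasBoundedGammaVariation P γ μ ⇑(c • F)) ∧
    -- `‖·‖_{V_γ(μ;X)}` is a norm on `V_γ(μ;X)`:
    (gammaVar P γ μ ⇑(0 : VectorMeasure S X) = 0) ∧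
    (∀ F : VectorMeasure S X, HasBoundedGammaVariation P γ μ ⇑F →
      gammaVar P γ μ ⇑F = 0 → F = 0) ∧
    (∀ F : VectorMeasure S X, HasBoundedGammaVariation P γ μ ⇑F →
      0 ≤ gammaVar P γ μ ⇑F) ∧
    (∀ (c : ℝ) (F : VectorMeasure S X), HasBoundedGammaVariation P γ μ ⇑F →
      gammaVar P γ μ ⇑(c • F) = |c| * gammaVar P γ μ ⇑F) ∧
    (∀ F G : VectorMeasure S X, HasBoundedGammaVariation P γ μ ⇑F →
      HasBoundedGammaVariation P γ μ ⇑G →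
      gammaVar P γ μ ⇑(F + G) ≤ gammaVar P γ μ ⇑F + gammaVar P γ μ ⇑G) ∧
    -- completeness: every Cauchy sequence in the `γ`-variation norm converges:
    (∀ F : ℕ → VectorMeasure S X, (∀ n, HasBoundedGammaVariation P γ μ ⇑(F n)) →
      (∀ ε : ℝ, 0 < ε → ∃ N : ℕ, ∀ m ≥ N, ∀ n ≥ N, gammaVar P γ μ ⇑(F m - F n) < ε) →
      ∃ G : VectorMeasure S X, HasBoundedGammaVariation P γ μ ⇑G ∧
        ∀ ε : ℝ, 0 < ε → ∃ N : ℕ, ∀ n ≥ N, gammaVar P γ μ ⇑(F n - G) < ε) := by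
  classical
  obtain ⟨hm, hind, hmap⟩ := hγ
  have hKpos : 0 < Real.sqrt GVAux.Ig := Real.sqrt_pos.mpr GVAux.Ig_pos
  refine ⟨?_, ?_, ?_, ?_, ?_, ?_, ?_, ?_, ?_⟩
  · -- 0 has bounded variation
    exact GVAux.bdd_zero_fun (fun s => rfl)
  · -- closed under addition
    intro F G hF hG
    exact (GVAux.bdd_add hm hmap hF hG).1
  · -- closed under scalar multiplication
    intro c F hF
    exact GVAux.bdd_smul hF c
  · -- gammaVar 0 = 0
    exact GVAux.gammaVar_zero_fun (fun s => rfl)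
  · -- definiteness
    intro F hF h0
    refine VectorMeasure.ext fun A hA => ?_
    have h1 := GVAux.norm_apply_le hm hmap F hF hA
    rw [h0] at h1
    have h3 : ‖F A‖ ≤ 0 := by
      by_contra hcon
      push_neg at hcon
      nlinarith [mul_pos hKpos hcon]
    have h4 : ‖F A‖ = 0 := le_antisymm h3 (norm_nonneg _)
    rw [VectorMeasure.zero_apply]
    exact norm_eq_zero.mp h4
  · -- nonnegativity
    intro F hF
    exact GVAux.gammaVar_nonneg hF
  · -- homogeneity
    intro c F hF
    exact GVAux.gammaVar_smul hF c
  · -- triangle inequality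
    intro F G hF hG
    exact (GVAux.bdd_add hm hmap hF hG).2
  · -- completeness
    intro F hFb hFc
    have hsubbdd : ∀ m n, BddAbove (gammaVarSet P γ μ ⇑(F m - F n)) :=
      fun m n => GVAux.bdd_sub hm hmap (hFb m) (hFb n)
    have huc : ∀ m n (A : Set S), MeasurableSet A →
        Real.sqrt GVAux.Ig * ‖F m A - F n A‖ ≤ 2 * gammaVar P γ μ ⇑(F m - F n) := by
      intro m n A hA
      have := GVAux.norm_apply_le hm hmap (F m - F n) (hsubbdd m n) hA
      rwa [VectorMeasure.sub_apply] at this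
    have hex : ∀ A : Set S, ∃ x : X, Filter.Tendsto (fun n => F n A) Filter.atTop (nhds x) := by
      intro A
      by_cases hA : MeasurableSet A
      · refine cauchySeq_tendsto_of_complete ?_
        rw [Metric.cauchySeq_iff]
        intro ε hε
        obtain ⟨N, hN⟩ := hFc (Real.sqrt GVAux.Ig * ε / 2) (by positivity)
        refine ⟨N, fun m hm' n hn' => ?_⟩
        have h1 := huc m n A hA
        have h2 := hN m hm' n hn'
        rw [dist_eq_norm]
        nlinarith [norm_nonneg (F m A - F n A)]
      · refine ⟨0, ?_⟩
        have he : (fun n => F n A) = fun _ => (0 : X) :=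
          funext fun n => VectorMeasure.not_measurable _ hA
        rw [he]
        exact tendsto_const_nhds
    choose g hg using hex
    have hunif : ∀ ε : ℝ, 0 < ε → ∃ N, ∀ n ≥ N, ∀ A : Set S, MeasurableSet A →
        ‖g A - F n A‖ ≤ ε := by
      intro ε hε
      obtain ⟨N, hN⟩ := hFc (Real.sqrt GVAux.Ig * ε / 2) (by positivity)
      refine ⟨N, fun n hn A hA => ?_⟩
      have hlim : Filter.Tendsto (fun m => ‖F m A - F n A‖) Filter.atTop
          (nhds ‖g A - F n A‖) := ((hg A).sub tendsto_const_nhds).norm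
      refine le_of_tendsto hlim (Filter.eventually_atTop.mpr ⟨N, fun m hm' => ?_⟩)
      have h1 := huc m n A hA
      have h2 := hN m hm' n hn
      nlinarith [norm_nonneg (F m A - F n A)]
    have hgadd : ∀ (f : ℕ → Set S), (∀ i, MeasurableSet (f i)) → Pairwise (Disjoint on f) →
        ∀ s : Finset ℕ, ∑ i ∈ s, g (f i) = g (⋃ i ∈ s, f i) := by
      intro f hf hd s
      have h1 : Filter.Tendsto (fun n => ∑ i ∈ s, F n (f i)) Filter.atTop
          (nhds (∑ i ∈ s, g (f i))) := tendsto_finset_sum _ fun i _ => hg (f i)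
      have h2 : Filter.Tendsto (fun n => F n (⋃ i ∈ s, f i)) Filter.atTop
          (nhds (g (⋃ i ∈ s, f i))) := hg _
      refine tendsto_nhds_unique ?_ h2
      have he : (fun n => ∑ i ∈ s, F n (f i)) = fun n => F n (⋃ i ∈ s, f i) :=
        funext fun n => GVAux.vm_sum_finset (F n) hf hd s
      rwa [he] at h1
    have hgsumm : ∀ ⦃f : ℕ → Set S⦄, (∀ i, MeasurableSet (f i)) → Pairwise (Disjoint on f) →
        HasSum (fun i => g (f i)) (g (⋃ i, f i)) := by
      intro f hf hd
      refine Metric.tendsto_atTop.mpr ?_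
      intro ε hε
      obtain ⟨N, hN⟩ := hunif (ε / 4) (by positivity)
      obtain ⟨s₀, hs₀⟩ := Metric.tendsto_atTop.mp ((F N).m_iUnion hf hd) (ε / 4) (by positivity)
      refine ⟨s₀, fun s hss => ?_⟩
      have hB : MeasurableSet (⋃ i ∈ s, f i) :=
        MeasurableSet.biUnion s.countable_toSet fun i _ => hf i
      have hU : MeasurableSet (⋃ i, f i) := MeasurableSet.iUnion hf
      have e1 : ∑ i ∈ s, g (f i) = g (⋃ i ∈ s, f i) := hgadd f hf hd s
      have e2 : ∑ i ∈ s, F N (f i) = F N (⋃ i ∈ s, f i) := GVAux.vm_sum_finset (F N) hf hd s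
      have d1 : ‖g (⋃ i ∈ s, f i) - F N (⋃ i ∈ s, f i)‖ ≤ ε / 4 := hN N le_rfl _ hB
      have d2 : ‖F N (⋃ i ∈ s, f i) - F N (⋃ i, f i)‖ < ε / 4 := by
        have := hs₀ s hss
        rw [dist_eq_norm, e2] at this
        exact this
      have d3 : ‖F N (⋃ i, f i) - g (⋃ i, f i)‖ ≤ ε / 4 := by
        rw [norm_sub_rev]
        exact hN N le_rfl _ hU
      rw [dist_eq_norm, e1]
      have hdec : g (⋃ i ∈ s, f i) - g (⋃ i, f i) =
          (g (⋃ i ∈ s, f i) - F N (⋃ i ∈ s, f i)) +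
          (F N (⋃ i ∈ s, f i) - F N (⋃ i, f i)) +
          (F N (⋃ i, f i) - g (⋃ i, f i)) := by abel
      rw [hdec]
      calc ‖_ + _ + _‖ ≤ ‖g (⋃ i ∈ s, f i) - F N (⋃ i ∈ s, f i)‖ +
            ‖F N (⋃ i ∈ s, f i) - F N (⋃ i, f i)‖ +
            ‖F N (⋃ i, f i) - g (⋃ i, f i)‖ := norm_add₃_le
        _ < ε := by linarith
    set G : VectorMeasure S X :=
      { measureOf' := g
        empty' := by
          refine tendsto_nhds_unique (hg ∅) ?_
          have he : (fun n => F n ∅) = fun _ => (0 : X) :=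
            funext fun n => (F n).empty
          rw [he]
          exact tendsto_const_nhds
        not_measurable' := by
          intro A hA
          refine tendsto_nhds_unique (hg A) ?_
          have he : (fun n => F n A) = fun _ => (0 : X) :=
            funext fun n => VectorMeasure.not_measurable _ hA
          rw [he]
          exact tendsto_const_nhds
        m_iUnion' := hgsumm } with hGdef
    have hGapp : ∀ A, G A = g A := fun A => rfl
    -- key smallness estimate
    have hsmall : ∀ ε : ℝ, 0 < ε → ∃ N, ∀ k ≥ N, ∀ (Nc : ℕ) (A : Fin Nc → Set S),
        (∀ n, MeasurableSet (A n)) → Pairwise (Disjoint on A) → (∀ n, 0 < μ (A n)) →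
        Real.sqrt (∫ ω, ‖GVAux.gsum γ μ (fun s => g s - F k s) A ω‖ ^ 2 ∂P) ≤ ε := by
      intro ε hε
      obtain ⟨N, hN⟩ := hFc (ε / 2) (by positivity)
      refine ⟨N, fun k hk Nc A hmeas hdisj hpos => ?_⟩
      have hle : ∀ δ : ℝ, 0 < δ →
          Real.sqrt (∫ ω, ‖GVAux.gsum γ μ (fun s => g s - F k s) A ω‖ ^ 2 ∂P) ≤ ε / 2 + δ := by
        intro δ hδ
        set Csum := ∑ n : Fin Nc, Real.sqrt GVAux.Ig / Real.sqrt ((μ (A n)).toReal) with hCs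
        have hCnn : 0 ≤ Csum := Finset.sum_nonneg fun n _ => by positivity
        obtain ⟨M, hM⟩ := hunif (δ / (Csum + 1)) (by positivity)
        set m := max N M with hmdef
        have hdecf : (fun s => g s - F k s) =
            fun s => (g s - F m s) + (F m s - F k s) := funext fun s => by abel
        rw [hdecf]
        have htri := GVAux.vterm_add_le (μ := μ) hm hmap
          (fun s => g s - F m s) (fun s => F m s - F k s) A
        have b1 : Real.sqrt (∫ ω, ‖GVAux.gsum γ μ (fun s => g s - F m s) A ω‖ ^ 2 ∂P) ≤ δ := by
          refine (GVAux.vterm_le_sum hm hmap _ A hpos).trans ?_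
          calc ∑ n : Fin Nc, (Real.sqrt GVAux.Ig / Real.sqrt ((μ (A n)).toReal)) *
                ‖g (A n) - F m (A n)‖
              ≤ ∑ n : Fin Nc, (Real.sqrt GVAux.Ig / Real.sqrt ((μ (A n)).toReal)) *
                (δ / (Csum + 1)) := by
                refine Finset.sum_le_sum fun n _ => ?_
                exact mul_le_mul_of_nonneg_left
                  (hM m (le_max_right _ _) (A n) (hmeas n)) (by positivity)
            _ = Csum * (δ / (Csum + 1)) := by rw [hCs, Finset.sum_mul]
            _ ≤ δ := by
                rw [mul_div_assoc', div_le_iff₀ (by linarith : (0:ℝ) < Csum + 1)]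
                nlinarith
        have b2 : Real.sqrt (∫ ω, ‖GVAux.gsum γ μ (fun s => F m s - F k s) A ω‖ ^ 2 ∂P)
            ≤ ε / 2 := by
          have hmem : Real.sqrt (∫ ω, ‖GVAux.gsum γ μ (fun s => F m s - F k s) A ω‖ ^ 2 ∂P)
              ∈ gammaVarSet P γ μ ⇑(F m - F k) :=
            GVAux.vterm_mem (fun s => F m s - F k s) A hmeas hdisj hpos
          have h1 : Real.sqrt (∫ ω, ‖GVAux.gsum γ μ (fun s => F m s - F k s) A ω‖ ^ 2 ∂P)
              ≤ gammaVar P γ μ ⇑(F m - F k) := le_csSup (hsubbdd m k) hmem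
          have h2 := hN m (le_max_left _ _) k hk
          have : gammaVar P γ μ ⇑(F m - F k) < ε / 2 := h2
          linarith
        linarith
      by_contra hcon
      push_neg at hcon
      have := hle ((Real.sqrt (∫ ω, ‖GVAux.gsum γ μ (fun s => g s - F k s) A ω‖ ^ 2 ∂P)
        - ε / 2) / 2) (by linarith)
      linarith
    refine ⟨G, ?_, ?_⟩
    · -- bounded variation of G
      obtain ⟨N₁, hN₁⟩ := hsmall 1 one_pos
      refine ⟨gammaVar P γ μ ⇑(F N₁) + 1, ?_⟩
      rintro v ⟨Nc, A, hmeas, hdisj, hpos, rfl⟩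
      show Real.sqrt (∫ ω, ‖GVAux.gsum γ μ (⇑G) A ω‖ ^ 2 ∂P) ≤ gammaVar P γ μ ⇑(F N₁) + 1
      have he : ⇑G = fun s => (g s - F N₁ s) + F N₁ s := funext fun s => by
        rw [hGapp]; abel
      rw [he]
      have htri := GVAux.vterm_add_le (μ := μ) hm hmap
        (fun s => g s - F N₁ s) (fun s => F N₁ s) A
      have b1 := hN₁ N₁ le_rfl Nc A hmeas hdisj hpos
      have b2 : Real.sqrt (∫ ω, ‖GVAux.gsum γ μ (fun s => F N₁ s) A ω‖ ^ 2 ∂P)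
          ≤ gammaVar P γ μ ⇑(F N₁) :=
        le_csSup (hFb N₁) (GVAux.vterm_mem (fun s => F N₁ s) A hmeas hdisj hpos)
      linarith
    · -- convergence
      intro ε hε
      obtain ⟨N, hN⟩ := hsmall (ε / 2) (by positivity)
      refine ⟨N, fun n hn => ?_⟩
      have hb : ∀ v ∈ gammaVarSet P γ μ ⇑(F n - G), v ≤ ε / 2 := by
        rintro v ⟨Nc, A, hmeas, hdisj, hpos, rfl⟩
        show Real.sqrt (∫ ω, ‖GVAux.gsum γ μ (⇑(F n - G)) A ω‖ ^ 2 ∂P) ≤ ε / 2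
        have he : ⇑(F n - G) = fun s => F n s - g s := funext fun s => by
          rw [VectorMeasure.sub_apply, hGapp]
        rw [he, GVAux.vterm_sub_rev]
        exact hN n hn Nc A hmeas hdisj hpos
      have hfin : gammaVar P γ μ ⇑(F n - G) ≤ ε / 2 :=
        csSup_le ⟨0, GVAux.zero_mem_gammaVarSet _⟩ hb
      linarith
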